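/- Let λ > 0, Ω > 0, T > 0 with T < π/Ω, ρ > 0, and let K, K' be positive integers with K ≥ ρ/T and K' ≥ (π ρ T^{−1} + (K+1) Ω T)/(π − Ω T). Set N = K + K' and N_Ω = ⌈Ω (K+K'+1) T/(2π)⌉. Let p : ℝ → ℝ be of compact λ-exceedance with parameter ρ, set p[k] = p((k−K)T) and define the residual s[k] = p[k] − M_λ(p[k]) for k = 0, …, N. Then every index ℓ ∈ {0, …, N−1} with s[ℓ+1] ≠ s[ℓ] satisfies ℓ ≤ N − 2(N_Ω − 1); in particular, max_{ℓ ∈ L_λ} ℓ ≤ N − 2(N_Ω − 1), where L_λ = {ℓ : Δs[ℓ] ≠ 0} is the set of fold locations. -/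

import Mathlib

open Real

/-- The centered modulo operator `M_λ(t) = t − 2λ⌊(t+λ)/(2λ)⌋`. -/
noncomputable def centeredModulo (lam t : ℝ) : ℝ :=
  t - 2 * lam * ⌊(t + lam) / (2 * lam)⌋

/-- **Bound on fold locations.**
Under the sampling conditions of the recovery corollary, if `p` is of compact
`λ`-exceedance with parameter `ρ`, `p[k] = p((k−K)T)` and
`s[k] = p[k] − M_λ(p[k])`, then every index `ℓ ∈ {0,…,N−1}` with
`s[ℓ+1] ≠ s[ℓ]` satisfies `ℓ ≤ N − 2(N_Ω − 1)`, where `N = K + K'` and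
`N_Ω = ⌈Ω(K+K'+1)T/(2π)⌉`. -/
theorem fold_locations_bounded
    (lam Ω T ρ : ℝ) (K K' : ℕ)
    (hlam : 0 < lam) (hΩ : 0 < Ω) (hT : 0 < T) (hTΩ : T < π / Ω) (hρ : 0 < ρ)
    (hK : 0 < K) (hK' : 0 < K')
    (hKρ : ρ / T ≤ (K : ℝ))
    (hK'cond : (π * ρ * T⁻¹ + ((K : ℝ) + 1) * Ω * T) / (π - Ω * T) ≤ (K' : ℝ))
    (p : ℝ → ℝ) (hp : ∀ t : ℝ, ρ < |t| → |p t| < lam)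
    (s : ℕ → ℝ)
    (hs : ∀ k : ℕ, k ≤ K + K' →
      s k = p (((k : ℝ) - (K : ℝ)) * T)
        - centeredModulo lam (p (((k : ℝ) - (K : ℝ)) * T)))
    (ℓ : ℕ) (hℓ : ℓ < K + K') (hfold : s (ℓ + 1) ≠ s ℓ) :
    (ℓ : ℤ) ≤ ((K : ℤ) + (K' : ℤ))
      - 2 * (⌈Ω * ((K : ℝ) + (K' : ℝ) + 1) * T / (2 * π)⌉ - 1) := by
  have hπ : (0 : ℝ) < π := Real.pi_pos
  have hden : 0 < π - Ω * T := by
    have := (lt_div_iff₀ hΩ).mp hTΩ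
    linarith
  -- centeredModulo is the identity on (-lam, lam)
  have hcm : ∀ t : ℝ, |t| < lam → centeredModulo lam t = t := by
    intro t ht
    rw [abs_lt] at ht
    unfold centeredModulo
    have h2 : (0 : ℝ) < 2 * lam := by linarith
    have hfl : ⌊(t + lam) / (2 * lam)⌋ = 0 := by
      rw [Int.floor_eq_zero_iff]
      constructor
      · exact div_nonneg (by linarith) (by linarith)
      · rw [div_lt_one h2]; linarith
    rw [hfl]; ring
  -- find an index k ∈ {ℓ, ℓ+1} where s is nonzero
  have key : ∃ k, (k = ℓ ∨ k = ℓ + 1) ∧ s k ≠ 0 := by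
    by_contra h
    push_neg at h
    exact hfold (by rw [h (ℓ + 1) (Or.inr rfl), h ℓ (Or.inl rfl)])
  obtain ⟨k, hk, hsk⟩ := key
  have hkle : k ≤ K + K' := by rcases hk with rfl | rfl <;> omega
  have hsk' := hs k hkle
  have hple : ¬ (ρ < |((k : ℝ) - (K : ℝ)) * T|) := by
    intro hgt
    exact hsk (by rw [hsk', hcm _ (hp _ hgt)]; ring)
  push_neg at hple
  have h1 : ((k : ℝ) - (K : ℝ)) * T ≤ ρ := le_trans (le_abs_self _) hple
  have hkR : (k : ℝ) ≤ (K : ℝ) + ρ * T⁻¹ := by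
    have : ((k : ℝ) - (K : ℝ)) ≤ ρ * T⁻¹ := by
      rw [← div_eq_mul_inv]
      rw [le_div_iff₀ hT]
      linarith
    linarith
  have hℓk : ℓ ≤ k := by rcases hk with rfl | rfl <;> omega
  have hℓR : (ℓ : ℝ) ≤ (K : ℝ) + ρ * T⁻¹ := le_trans (by exact_mod_cast hℓk) hkR
  -- arithmetic on the ceiling
  set c : ℤ := ⌈Ω * ((K : ℝ) + (K' : ℝ) + 1) * T / (2 * π)⌉ with hc
  have hcl : (c : ℝ) < Ω * ((K : ℝ) + (K' : ℝ) + 1) * T / (2 * π) + 1 :=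
    Int.ceil_lt_add_one _
  have hcl2 : 2 * ((c : ℝ) - 1) * π < Ω * ((K : ℝ) + (K' : ℝ) + 1) * T := by
    have h2 : (c : ℝ) - 1 < Ω * ((K : ℝ) + (K' : ℝ) + 1) * T / (2 * π) := by
      linarith
    have := mul_lt_mul_of_pos_right h2 (by linarith : (0 : ℝ) < 2 * π)
    rw [div_mul_cancel₀ _ (by linarith : (2 : ℝ) * π ≠ 0)] at this
    nlinarith
  have hA : π * ρ * T⁻¹ + ((K : ℝ) + 1) * Ω * T ≤ (K' : ℝ) * (π - Ω * T) :=
    (div_le_iff₀ hden).mp hK'cond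
  have hB : π * ρ * T⁻¹ + ((K : ℝ) + (K' : ℝ) + 1) * Ω * T ≤ (K' : ℝ) * π := by
    nlinarith
  have hfin : ρ * T⁻¹ + 2 * ((c : ℝ) - 1) ≤ (K' : ℝ) := by
    nlinarith
  have : (ℓ : ℝ) ≤ ((K : ℝ) + (K' : ℝ)) - 2 * ((c : ℝ) - 1) := by linarith
  exact_mod_cast this
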